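/- Let f_d = c · z^μ be a nonzero monomial (c ≠ 0, μ ∈ Z_{≥0}^k with all μ_i ≥ 1) and f_{d−1} = Σ_{|ν|=2, ν ≼ μ} c_{μ−ν} b z_ν z^{μ−ν} with b ≠ 0 and multinomial coefficients c_{μ−ν} ≠ 0, where the z_ν (|ν|=2) are independent new variables. Then z_i divides f_{d−1} for some 1 ≤ i ≤ k if and only if μ_i ≥ 3 for that i; in particular, if all μ_i ≤ 2 and k ≥ 2 or μ_1 = 2, then f_{d−1} and the squarefree reduction of f_d are coprime. -/

import Mathlib

open MvPolynomial

section AuxLemmas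

variable {σ : Type*} {R : Type*} [CommRing R]

lemma aux_X_dvd_iff_support (i : σ) (p : MvPolynomial σ R) :
    X i ∣ p ↔ ∀ m ∈ p.support, m i ≠ 0 := by
  classical
  constructor
  · rintro ⟨q, rfl⟩ m hm h0
    rw [mem_support_iff, mul_comm, coeff_mul_X'] at hm
    simp [Finsupp.mem_support_iff, h0] at hm
  · intro h
    rw [← support_sum_monomial_coeff p]
    exact Finset.dvd_sum fun m hm => X_dvd_monomial.mpr (Or.inr (h m hm))

variable [DecidableEq σ]

/-- Substitution sending `X i` to `0` and fixing the other variables. -/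
noncomputable def subZ (i : σ) : MvPolynomial σ R →ₐ[R] MvPolynomial σ R :=
  aeval (fun j => if j = i then 0 else X j)

lemma subZ_X (i j : σ) : subZ i (X j : MvPolynomial σ R) = if j = i then 0 else X j := by
  simp [subZ]

lemma subZ_monomial (i : σ) (m : σ →₀ ℕ) (a : R) :
    subZ i (monomial m a) = if m i = 0 then monomial m a else 0 := by
  rw [subZ, aeval_monomial]
  split_ifs with h
  · have he : (m.prod fun j e => (if j = i then (0 : MvPolynomial σ R) else X j) ^ e)
        = m.prod fun j e => (X j : MvPolynomial σ R) ^ e := by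
      apply Finsupp.prod_congr
      intro j hj
      have : j ≠ i := fun hji => (Finsupp.mem_support_iff.mp hj) (hji ▸ h)
      simp [this]
    rw [he, Finsupp.prod, prod_X_pow_eq_monomial, algebraMap_eq, C_mul_monomial, mul_one]
  · have hi : i ∈ m.support := Finsupp.mem_support_iff.mpr h
    rw [Finsupp.prod, Finset.prod_eq_zero hi (by simp [zero_pow h]), mul_zero]

lemma X_dvd_sub_subZ (i : σ) (p : MvPolynomial σ R) : X i ∣ p - subZ i p := by
  have he : p - subZ i p = ∑ m ∈ p.support,
      (monomial m (coeff m p) - subZ i (monomial m (coeff m p))) := by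
    rw [Finset.sum_sub_distrib, ← map_sum, support_sum_monomial_coeff p]
  rw [he]
  apply Finset.dvd_sum
  intro m _
  rw [subZ_monomial]
  split_ifs with h
  · simp
  · rw [sub_zero]
    exact X_dvd_monomial.mpr (Or.inr h)

lemma X_dvd_iff_subZ (i : σ) (p : MvPolynomial σ R) : X i ∣ p ↔ subZ i p = 0 := by
  constructor
  · rintro ⟨q, rfl⟩
    rw [map_mul, subZ_X, if_pos rfl, zero_mul]
  · intro h
    have := X_dvd_sub_subZ i p
    rwa [h, sub_zero] at this

lemma prime_X_mv [IsDomain R] (i : σ) : Prime (X i : MvPolynomial σ R) := by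
  refine ⟨X_ne_zero i, fun hu => ?_, fun a b hab => ?_⟩
  · have := hu.map (subZ i (R := R))
    rw [subZ_X, if_pos rfl] at this
    exact not_isUnit_zero this
  · rw [X_dvd_iff_subZ] at hab ⊢
    rw [X_dvd_iff_subZ]
    rw [map_mul] at hab
    rcases mul_eq_zero.mp hab with h | h
    · exact Or.inl h
    · exact Or.inr h

lemma aux_prod_inl {k : ℕ} (τ : Type*) (e : Fin k →₀ ℕ) :
    (∏ j, (X (Sum.inl j) : MvPolynomial (Fin k ⊕ τ) R) ^ (e j))
      = monomial (e.embDomain ⟨Sum.inl, Sum.inl_injective⟩) 1 := by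
  rw [← prod_X_pow_eq_monomial, Finsupp.support_embDomain, Finset.prod_map]
  have hc : ∀ j ∈ e.support,
      (X ((⟨Sum.inl, Sum.inl_injective⟩ : Fin k ↪ (Fin k ⊕ τ)) j) :
          MvPolynomial (Fin k ⊕ τ) R) ^
        ((e.embDomain ⟨Sum.inl, Sum.inl_injective⟩) ((⟨Sum.inl, Sum.inl_injective⟩ :
          Fin k ↪ (Fin k ⊕ τ)) j))
      = X (Sum.inl j) ^ e j := by
    intro j _
    rw [Finsupp.embDomain_apply_self]
    rfl
  rw [Finset.prod_congr rfl hc]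
  exact (Finset.prod_subset (Finset.subset_univ _)
    (fun x _ hx => by rw [Finsupp.notMem_support_iff.mp hx, pow_zero])).symm

end AuxLemmas

/-- Let `f_d = c·z^μ` be a nonzero monomial with all `μ_i ≥ 1` and `d = |μ| ≥ 2`, with
squarefree reduction `f̃_d = c·z^{μ−(1,…,1)}`, and let
`f_{d−1} = Σ_{|ν|=2, ν ≼ μ} c_{μ−ν} b z_ν z^{μ−ν}` with `b ≠ 0`, where the `z_ν` are new
independent variables (`X (Sum.inr ν)`) and `c_λ` are multinomial coefficients. Then
`z_i ∣ f_{d−1}` iff `μ_i ≥ 3`; in particular, if all `μ_i ≤ 2` (and `k ≥ 2` or `μ_1 = 2`),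
then `f_{d−1}` and `f̃_d` are coprime (no common non-unit divisor). -/
theorem parallelepiped_normality_criterion
    (K : Type*) [Field K] [CharZero K] (k : ℕ) (μ : Fin k →₀ ℕ)
    (hμ : ∀ i, 1 ≤ μ i) (hd : 2 ≤ μ.sum fun _ m => m)
    (b c : K) (hb : b ≠ 0) (hc : c ≠ 0)
    (ftd fd1 : MvPolynomial (Fin k ⊕ (Fin k →₀ ℕ)) K)
    (hftd : ftd = C c * ∏ j, X (Sum.inl j) ^ (μ j - 1))
    (hfd1 : fd1 = ∑ ν ∈ (Finset.Iic μ).filter (fun ν => (ν.sum fun _ m => m) = 2),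
      C ((Nat.multinomial Finset.univ ⇑(μ - ν) : K) * b) * X (Sum.inr ν) *
        ∏ j, X (Sum.inl j) ^ ((μ - ν) j)) :
    (∀ i : Fin k, X (Sum.inl i) ∣ fd1 ↔ 3 ≤ μ i) ∧
    ((∀ i, μ i ≤ 2) → (2 ≤ k ∨ ∃ i, μ i = 2) →
      ∀ q : MvPolynomial (Fin k ⊕ (Fin k →₀ ℕ)) K, q ∣ ftd → q ∣ fd1 → IsUnit q) := by
  classical
  set S : Finset (Fin k →₀ ℕ) :=
    (Finset.Iic μ).filter (fun ν => (ν.sum fun _ m => m) = 2) with hS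
  have hmemS : ∀ ν, ν ∈ S ↔ ν ≤ μ ∧ (ν.sum fun _ m => m) = 2 := by
    intro ν
    simp [hS, Finset.mem_filter, Finset.mem_Iic]
  have hν_le2 : ∀ ν ∈ S, ∀ i, ν i ≤ 2 := by
    intro ν hν i
    have h2 := ((hmemS ν).mp hν).2
    by_cases h : ν i = 0
    · omega
    · have : ν i ≤ ∑ j ∈ ν.support, ν j :=
        Finset.single_le_sum (fun j _ => Nat.zero_le _) (Finsupp.mem_support_iff.mpr h)
      have hsum : (ν.sum fun _ m => m) = ∑ j ∈ ν.support, ν j := rfl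
      omega
  -- each term is a monomial
  set Emb : Fin k ↪ (Fin k ⊕ (Fin k →₀ ℕ)) := ⟨Sum.inl, Sum.inl_injective⟩ with hEmb
  set E : (Fin k →₀ ℕ) → ((Fin k ⊕ (Fin k →₀ ℕ)) →₀ ℕ) :=
    fun ν => Finsupp.single (Sum.inr ν) 1 + (μ - ν).embDomain Emb with hE
  set a : (Fin k →₀ ℕ) → K :=
    fun ν => (Nat.multinomial Finset.univ ⇑(μ - ν) : K) * b with ha
  have hterm : ∀ ν : Fin k →₀ ℕ,
      C ((Nat.multinomial Finset.univ ⇑(μ - ν) : K) * b) * X (Sum.inr ν) *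
        (∏ j, X (Sum.inl j) ^ ((μ - ν) j)) = monomial (E ν) (a ν) := by
    intro ν
    rw [C_mul_X_eq_monomial, aux_prod_inl _ (μ - ν), monomial_mul, mul_one]
  have hinr0 : ∀ (w : Fin k →₀ ℕ) (x : Fin k →₀ ℕ),
      (w.embDomain Emb) (Sum.inr x) = 0 := by
    intro w x
    apply Finsupp.embDomain_notin_range
    simp [hEmb]
  have hinl : ∀ (w : Fin k →₀ ℕ) (i : Fin k), (w.embDomain Emb) (Sum.inl i) = w i := by
    intro w i
    exact Finsupp.embDomain_apply_self Emb w i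
  have ha0 : ∀ ν, a ν ≠ 0 := by
    intro ν
    exact mul_ne_zero (Nat.cast_ne_zero.mpr (Nat.multinomial_pos _ _).ne') hb
  have hcoeff : ∀ ν₀ ∈ S, coeff (E ν₀) fd1 = a ν₀ := by
    intro ν₀ h₀
    rw [hfd1, Finset.sum_congr rfl (fun ν _ => hterm ν), coeff_sum]
    simp_rw [coeff_monomial]
    rw [Finset.sum_eq_single_of_mem ν₀ h₀, if_pos rfl]
    intro ν _ hne
    rw [if_neg]
    intro hEq
    have h1 := DFunLike.congr_fun hEq (Sum.inr ν)
    rw [hE] at h1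
    simp [Finsupp.add_apply, Finsupp.single_apply, hinr0, Ne.symm hne] at h1
  -- the key membership fact
  have hkey : ∀ ν₀ ∈ S, E ν₀ ∈ fd1.support := by
    intro ν₀ h₀
    rw [mem_support_iff, hcoeff ν₀ h₀]
    exact ha0 ν₀
  have hpart1 : ∀ i : Fin k, X (Sum.inl i) ∣ fd1 ↔ 3 ≤ μ i := by
    intro i
    constructor
    · intro hdvd
      by_contra hlt
      push_neg at hlt
      have hcase : μ i = 1 ∨ μ i = 2 := by have := hμ i; omega
      -- construct a witness ν₀ ∈ S with (μ - ν₀) i = 0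
      have hwit : ∃ ν₀ ∈ S, (μ - ν₀) i = 0 := by
        rcases hcase with h1 | h2
        · -- μ i = 1 : there is another index j
          have hsum : (μ.sum fun _ m => m) = ∑ j, μ j := by
            rw [Finsupp.sum_fintype]
            intro x
            rfl
          have hj : ∃ j : Fin k, j ≠ i := by
            by_contra hno
            push_neg at hno
            have huniv : (Finset.univ : Finset (Fin k)) = {i} :=
              Finset.eq_singleton_iff_unique_mem.mpr
                ⟨Finset.mem_univ i, fun x _ => hno x⟩
            rw [hsum, huniv, Finset.sum_singleton] at hd
            omega
          obtain ⟨j, hji⟩ := hj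
          refine ⟨Finsupp.single i 1 + Finsupp.single j 1, ?_, ?_⟩
          · rw [hmemS]
            constructor
            · intro x
              have hx := hμ x
              simp only [Finsupp.add_apply, Finsupp.single_apply]
              split_ifs with hix hjx hjx
              · exact absurd (hjx.trans hix.symm) hji
              · omega
              · omega
              · omega
            · rw [Finsupp.sum_add_index' (fun _ => rfl) (fun _ _ _ => rfl),
                Finsupp.sum_single_index rfl, Finsupp.sum_single_index rfl]
          · rw [Finsupp.tsub_apply]
            simp [Finsupp.single_apply, hji.symm, h1]
        · -- μ i = 2
          refine ⟨Finsupp.single i 2, ?_, ?_⟩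
          · rw [hmemS]
            refine ⟨Finsupp.single_le_iff.mpr (by omega), ?_⟩
            rw [Finsupp.sum_single_index rfl]
          · rw [Finsupp.tsub_apply]
            simp [Finsupp.single_apply, h2]
      obtain ⟨ν₀, hν₀S, hν₀i⟩ := hwit
      have hmem := hkey ν₀ hν₀S
      have := (aux_X_dvd_iff_support (Sum.inl i) fd1).mp hdvd (E ν₀) hmem
      apply this
      rw [hE]
      simp only [Finsupp.add_apply, Finsupp.single_apply, hinl]
      rw [if_neg (by simp), hν₀i]
    · intro h3
      rw [hfd1]
      apply Finset.dvd_sum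
      intro ν hν
      have hle := hν_le2 ν hν i
      have hpos : 1 ≤ (μ - ν) i := by
        rw [Finsupp.tsub_apply]
        omega
      have h1 : X (Sum.inl i) ∣ (∏ j, X (Sum.inl j) ^ ((μ - ν) j) :
          MvPolynomial (Fin k ⊕ (Fin k →₀ ℕ)) K) :=
        (dvd_pow_self _ (by omega)).trans
          (Finset.dvd_prod_of_mem (fun j => X (Sum.inl j) ^ ((μ - ν) j))
            (Finset.mem_univ i))
      exact h1.mul_left _
  refine ⟨hpart1, ?_⟩
  intro hle _ q hq1 hq2
  by_contra hqu
  have hftd0 : ftd ≠ 0 := by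
    rw [hftd]
    apply mul_ne_zero
    · intro h
      exact hc (by simpa using h)
    · rw [Finset.prod_ne_zero_iff]
      intro j _
      exact pow_ne_zero _ (X_ne_zero _)
  have hq0 : q ≠ 0 := fun h => hftd0 (zero_dvd_iff.mp (h ▸ hq1))
  obtain ⟨p, hpi, hpq⟩ := WfDvdMonoid.exists_irreducible_factor hqu hq0
  have hpp : Prime p := UniqueFactorizationMonoid.irreducible_iff_prime.mp hpi
  have hpd : p ∣ ftd := hpq.trans hq1
  rw [hftd] at hpd
  have hpprod : p ∣ ∏ j, X (Sum.inl j) ^ (μ j - 1) := by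
    rcases hpp.dvd_or_dvd hpd with h | h
    · exact absurd (isUnit_of_dvd_unit h (hc.isUnit.map C)) hpi.not_isUnit
    · exact h
  obtain ⟨j, _, hj⟩ := hpp.exists_mem_finset_dvd hpprod
  have hpx : p ∣ X (Sum.inl j) := hpp.dvd_of_dvd_pow hj
  have hxp : X (Sum.inl j) ∣ p := hpi.dvd_symm (prime_X_mv _).irreducible hpx
  have hxfd1 : X (Sum.inl j) ∣ fd1 := hxp.trans (hpq.trans hq2)
  have := (hpart1 j).mp hxfd1
  have := hle j
  omega
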